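/- Let G be a König-Egerváry graph. Then the following three statements are equivalent: (i) ξ(G) + η(G) = α(G); (ii) σ(G) + η(G) = μ(G); (iii) ξ(G) + 2η(G) + σ(G) = |V(G)|. -/

import Mathlib

open scoped Classical

namespace KEG

variable {V : Type*}

/-- `S` is a stable (independent) set of vertices of `G`. -/
def IsStable (G : SimpleGraph V) (S : Finset V) : Prop :=
  ∀ ⦃x⦄, x ∈ S → ∀ ⦃y⦄, y ∈ S → ¬G.Adj x y

/-- The stability number `α(G)`: maximum cardinality of a stable set. -/
noncomputable def alphaNum (G : SimpleGraph V) : ℕ :=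
  sSup {n | ∃ S : Finset V, IsStable G S ∧ S.card = n}

/-- `S` is a maximum stable set of `G`. -/
def IsMaxStable (G : SimpleGraph V) (S : Finset V) : Prop :=
  IsStable G S ∧ S.card = alphaNum G

/-- `M` is a matching of `G`: a set of edges of `G`, pairwise non-incident. -/
def IsMatching (G : SimpleGraph V) (M : Finset (Sym2 V)) : Prop :=
  (∀ e ∈ M, e ∈ G.edgeSet) ∧
    ∀ e ∈ M, ∀ f ∈ M, e ≠ f → ∀ v : V, v ∈ e → v ∉ f

/-- The matching number `μ(G)`: maximum cardinality of a matching. -/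
noncomputable def muNum (G : SimpleGraph V) : ℕ :=
  sSup {n | ∃ M : Finset (Sym2 V), IsMatching G M ∧ M.card = n}

/-- A perfect matching: a matching covering every vertex. -/
def IsPerfectMatching (G : SimpleGraph V) (M : Finset (Sym2 V)) : Prop :=
  IsMatching G M ∧ ∀ v : V, ∃ e ∈ M, v ∈ e

/-- A maximal matching: a matching such that no edge of `G` can be added to it
while keeping pairwise non-incidence, i.e. every edge of `G` outside `M` is
incident to an edge of `M`. -/
def IsMaximalMatching (G : SimpleGraph V) (M : Finset (Sym2 V)) : Prop :=
  IsMatching G M ∧ ∀ e ∈ G.edgeSet, e ∉ M → ∃ f ∈ M, ∃ v : V, v ∈ e ∧ v ∈ f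

/-- `G` is a König-Egerváry graph: `α(G) + μ(G) = |V(G)|`. -/
def KonigEgervary (G : SimpleGraph V) [Fintype V] : Prop :=
  alphaNum G + muNum G = Fintype.card V

/-- `e` is an α-critical edge of `G`: `α(G - e) > α(G)`. -/
def IsAlphaCritical (G : SimpleGraph V) (e : Sym2 V) : Prop :=
  e ∈ G.edgeSet ∧ alphaNum G < alphaNum (G.deleteEdges {e})

/-- `e` is a μ-critical edge of `G`: `μ(G - e) < μ(G)`. -/
def IsMuCritical (G : SimpleGraph V) (e : Sym2 V) : Prop :=
  e ∈ G.edgeSet ∧ muNum (G.deleteEdges {e}) < muNum G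

/-- `core(G)`: the set of vertices belonging to every maximum stable set of `G`. -/
def core (G : SimpleGraph V) : Set V :=
  {v | ∀ S : Finset V, IsMaxStable G S → v ∈ S}

/-- `ξ(G) = |core(G)|`. -/
noncomputable def xi (G : SimpleGraph V) : ℕ := (core G).ncard

/-- `σ(G)`: the number of vertices belonging to no maximum stable set of `G`. -/
noncomputable def sigmaNum (G : SimpleGraph V) : ℕ :=
  {v : V | ∀ S : Finset V, IsMaxStable G S → v ∉ S}.ncard

/-- `η(G)`: the number of α-critical edges of `G`. -/
noncomputable def eta (G : SimpleGraph V) : ℕ :=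
  {e : Sym2 V | IsAlphaCritical G e}.ncard

/-- `N(A)`: the set of vertices adjacent to some vertex of `A`. -/
def nbhd (G : SimpleGraph V) (A : Set V) : Set V :=
  {v | ∃ a ∈ A, G.Adj a v}

/-- `N[A] = A ∪ N(A)`: the closed neighborhood of `A`. -/
def closedNbhd (G : SimpleGraph V) (A : Set V) : Set V :=
  A ∪ nbhd G A


-- Auxiliary lemmas


lemma exists_max_stable [Fintype V] (G : SimpleGraph V) :
    ∃ S : Finset V, IsMaxStable G S := by
  have h1 : ({n | ∃ S : Finset V, IsStable G S ∧ S.card = n}).Nonempty :=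
    ⟨0, ∅, fun x hx => by simp at hx, rfl⟩
  have h2 : BddAbove {n | ∃ S : Finset V, IsStable G S ∧ S.card = n} := by
    refine ⟨Fintype.card V, ?_⟩
    rintro n ⟨S, -, rfl⟩
    simpa using Finset.card_le_univ S
  obtain ⟨S, hS, hc⟩ := Nat.sSup_mem h1 h2
  exact ⟨S, hS, hc⟩

lemma exists_max_matching [Fintype V] (G : SimpleGraph V) :
    ∃ M : Finset (Sym2 V), IsMatching G M ∧ M.card = muNum G := by
  have h1 : ({n | ∃ M : Finset (Sym2 V), IsMatching G M ∧ M.card = n}).Nonempty :=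
    ⟨0, ∅, ⟨fun e he => by simp at he, fun e he => by simp at he⟩, rfl⟩
  have h2 : BddAbove {n | ∃ M : Finset (Sym2 V), IsMatching G M ∧ M.card = n} := by
    refine ⟨Fintype.card (Sym2 V), ?_⟩
    rintro n ⟨M, -, rfl⟩
    simpa using Finset.card_le_univ M
  exact Nat.sSup_mem h1 h2

lemma sym2_rep (e : Sym2 V) : ∃ a b, e = s(a, b) := by
  induction e using Sym2.ind with
  | _ a b => exact ⟨a, b, rfl⟩

/-- Structure of a maximum matching vs a maximum stable set in a KE graph:
it saturates the complement of `S`, and every edge has exactly one endpoint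
outside `S`. -/
lemma matching_struct [Fintype V] {G : SimpleGraph V} (hG : KonigEgervary G)
    {M : Finset (Sym2 V)} (hM : IsMatching G M) (hMc : M.card = muNum G)
    {S : Finset V} (hS : IsMaxStable G S) :
    (∀ v, v ∉ S → ∃ e ∈ M, v ∈ e) ∧
    (∀ e ∈ M, ∀ v ∈ e, ∀ w ∈ e, v ≠ w → v ∉ S → w ∈ S) := by
  classical
  set T : Finset V := Finset.univ \ S with hT
  have hSle : S.card ≤ Fintype.card V := by simpa using Finset.card_le_univ S
  have hTcard : T.card ≤ M.card := by
    rw [hT, Finset.card_sdiff_of_subset (Finset.subset_univ S), Finset.card_univ]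
    have h1 := hS.2
    have h2 := hG
    rw [KonigEgervary] at h2
    omega
  have hone : ∀ e ∈ M, ∃ v, v ∈ e ∧ v ∉ S := by
    intro e he
    obtain ⟨a, b, rfl⟩ := sym2_rep e
    have hadj : G.Adj a b := G.mem_edgeSet.mp (hM.1 _ he)
    by_contra hcon
    push_neg at hcon
    exact hS.1 (hcon a (by simp)) (hcon b (by simp)) hadj
  have hsurj := Finset.surj_on_of_inj_on_of_card_le (s := M) (t := T)
      (fun e he => (hone e he).choose)
      (fun e he => by
        have := (hone e he).choose_spec
        simp only [hT, Finset.mem_sdiff, Finset.mem_univ, true_and]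
        exact this.2)
      (fun e1 e2 h1 h2 heq => by
        by_contra hne
        have heq' : (hone e1 h1).choose = (hone e2 h2).choose := heq
        have hm1 := (hone e1 h1).choose_spec.1
        have hm2 := (hone e2 h2).choose_spec.1
        rw [heq'] at hm1
        exact hM.2 e1 h1 e2 h2 hne _ hm1 hm2)
      hTcard
  constructor
  · intro v hv
    obtain ⟨e, he, hfe⟩ := hsurj v (by simp [hT, hv])
    exact ⟨e, he, hfe ▸ (hone e he).choose_spec.1⟩
  · intro e he v hv w hw hvw hvS
    by_contra hwS
    obtain ⟨e1, he1, hv1⟩ := hsurj v (by simp [hT, hvS])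
    obtain ⟨e2, he2, hv2⟩ := hsurj w (by simp [hT, hwS])
    have hv1 : v = (hone e1 he1).choose := hv1
    have hv2 : w = (hone e2 he2).choose := hv2
    have hv1' : v ∈ e1 := hv1 ▸ (hone e1 he1).choose_spec.1
    have hv2' : w ∈ e2 := hv2 ▸ (hone e2 he2).choose_spec.1
    have he1e : e1 = e := by
      by_contra hne
      exact hM.2 e1 he1 e he (hne) v hv1' hv
    have he2e : e2 = e := by
      by_contra hne
      exact hM.2 e2 he2 e he (hne) w hv2' hw
    subst he1e
    subst he2e
    exact hvw (hv1.trans hv2.symm)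

/-- The partner function of a matching. -/
noncomputable def pa (M : Finset (Sym2 V)) (v : V) : V :=
  if h : ∃ e ∈ M, v ∈ e then Sym2.Mem.other h.choose_spec.2 else v

lemma pa_mem {M : Finset (Sym2 V)} {v : V} (h : ∃ e ∈ M, v ∈ e) :
    s(v, pa M v) ∈ M := by
  rw [pa, dif_pos h, Sym2.other_spec]
  exact h.choose_spec.1

lemma pa_eq {G : SimpleGraph V} {M : Finset (Sym2 V)} (hM : IsMatching G M)
    {v w : V} (h : s(v, w) ∈ M) : pa M v = w := by
  have hex : ∃ e ∈ M, v ∈ e := ⟨_, h, by simp⟩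
  have h2 := pa_mem hex
  have heq : s(v, pa M v) = s(v, w) := by
    by_contra hne
    exact hM.2 _ h2 _ h hne v (by simp) (by simp)
  rcases Sym2.eq_iff.mp heq with ⟨-, h3⟩ | ⟨h3, h4⟩
  · exact h3
  · rw [h4, h3]

/-- Key identity: in a König–Egerváry graph, `α + σ = μ + ξ`. -/
lemma key [Fintype V] (G : SimpleGraph V) (hG : KonigEgervary G) :
    alphaNum G + sigmaNum G = muNum G + xi G := by
  classical
  obtain ⟨S, hS⟩ := exists_max_stable G
  obtain ⟨M, hM, hMc⟩ := exists_max_matching G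
  set D : Finset V := Finset.univ.filter (fun v => ∀ S' : Finset V, IsMaxStable G S' → v ∈ S')
    with hD
  set N : Finset V := Finset.univ.filter (fun v => ∀ S' : Finset V, IsMaxStable G S' → v ∉ S')
    with hN
  have hxi : xi G = D.card := by
    rw [xi]
    have : core G = ↑D := by
      ext v; simp [core, hD]
    rw [this, Set.ncard_coe_finset]
  have hsig : sigmaNum G = N.card := by
    rw [sigmaNum]
    have : {v : V | ∀ S : Finset V, IsMaxStable G S → v ∉ S} = ↑N := by
      ext v; simp [hN]
    rw [this, Set.ncard_coe_finset]
  have hDS : D ⊆ S := fun v hv => (Finset.mem_filter.mp hv).2 S hS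
  have hNS : N ⊆ Finset.univ \ S := by
    intro v hv
    simp only [Finset.mem_sdiff, Finset.mem_univ, true_and]
    exact (Finset.mem_filter.mp hv).2 S hS
  have hstruct := fun (S' : Finset V) (hS' : IsMaxStable G S') =>
    matching_struct hG hM hMc hS'
  have hpadj : ∀ v w : V, s(v, w) ∈ M → G.Adj v w := fun v w h =>
    G.mem_edgeSet.mp (hM.1 _ h)
  -- the bijection
  have hbij : (S \ D).card = ((Finset.univ \ S) \ N).card := by
    apply Finset.card_nbij' (pa M) (pa M)
    · -- forward map
      intro v hv
      rw [Finset.mem_coe, Finset.mem_sdiff] at hv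
      obtain ⟨hvS, hvD⟩ := hv
      have : ∃ S' : Finset V, IsMaxStable G S' ∧ v ∉ S' := by
        by_contra hcon
        push_neg at hcon
        exact hvD (by simp [hD]; exact hcon)
      obtain ⟨S', hS', hvS'⟩ := this
      have hex : ∃ e ∈ M, v ∈ e := (hstruct S' hS').1 v hvS'
      have hmem : s(v, pa M v) ∈ M := pa_mem hex
      have hadj := hpadj _ _ hmem
      have hpaS : pa M v ∉ S := fun hps => hS.1 hvS hps hadj
      have hpaN : pa M v ∉ N := by
        intro hpn
        apply hvD
        simp only [hD, Finset.mem_filter, Finset.mem_univ, true_and]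
        intro S'' hS''
        have hw : pa M v ∉ S'' := (Finset.mem_filter.mp hpn).2 S'' hS''
        exact (hstruct S'' hS'').2 _ hmem (pa M v) (by simp) v (by simp)
          (fun hh => hadj.ne hh.symm) hw
      simp only [Finset.mem_coe, Finset.mem_sdiff, Finset.mem_univ, true_and]
      exact ⟨hpaS, hpaN⟩
    · -- backward map
      intro w hw
      rw [Finset.mem_coe, Finset.mem_sdiff, Finset.mem_sdiff] at hw
      obtain ⟨⟨-, hwS⟩, hwN⟩ := hw
      have hex : ∃ e ∈ M, w ∈ e := (hstruct S hS).1 w hwS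
      have hmem : s(w, pa M w) ∈ M := pa_mem hex
      have hadj := hpadj _ _ hmem
      have hpaS : pa M w ∈ S :=
        (hstruct S hS).2 _ hmem w (by simp) (pa M w) (by simp) hadj.ne hwS
      have hpaD : pa M w ∉ D := by
        intro hpd
        apply hwN
        simp only [hN, Finset.mem_filter, Finset.mem_univ, true_and]
        intro S'' hS'' hwS''
        have hv : pa M w ∈ S'' := (Finset.mem_filter.mp hpd).2 S'' hS''
        exact hS''.1 hwS'' hv hadj
      rw [Finset.mem_coe, Finset.mem_sdiff]
      exact ⟨hpaS, hpaD⟩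
    · -- left inverse
      intro v hv
      rw [Finset.mem_coe, Finset.mem_sdiff] at hv
      obtain ⟨hvS, hvD⟩ := hv
      have : ∃ S' : Finset V, IsMaxStable G S' ∧ v ∉ S' := by
        by_contra hcon
        push_neg at hcon
        exact hvD (by simp [hD]; exact hcon)
      obtain ⟨S', hS', hvS'⟩ := this
      have hmem : s(v, pa M v) ∈ M := pa_mem ((hstruct S' hS').1 v hvS')
      rw [Sym2.eq_swap] at hmem
      exact pa_eq hM hmem
    · -- right inverse
      intro w hw
      rw [Finset.mem_coe, Finset.mem_sdiff, Finset.mem_sdiff] at hw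
      obtain ⟨⟨-, hwS⟩, -⟩ := hw
      have hmem : s(w, pa M w) ∈ M := pa_mem ((hstruct S hS).1 w hwS)
      rw [Sym2.eq_swap] at hmem
      exact pa_eq hM hmem
  -- final arithmetic
  have h1 : (S \ D).card + D.card = S.card := Finset.card_sdiff_add_card_eq_card hDS
  have h2 : ((Finset.univ \ S) \ N).card + N.card = (Finset.univ \ S).card :=
    Finset.card_sdiff_add_card_eq_card hNS
  have h3 : (Finset.univ \ S).card + S.card = Fintype.card V := by
    have h := Finset.card_sdiff_add_card_eq_card (Finset.subset_univ S)
    simpa using h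
  have h4 := hS.2
  have h5 := hG
  rw [KonigEgervary] at h5
  rw [hxi, hsig]
  omega


/-- In a König-Egerváry graph, the equalities `ξ + η = α`, `σ + η = μ` and
`ξ + 2η + σ = |V(G)|` are equivalent. -/
theorem stmt_15 {V : Type*} [Fintype V] (G : SimpleGraph V)
    (hG : KonigEgervary G) :
    List.TFAE
      [xi G + eta G = alphaNum G,
       sigmaNum G + eta G = muNum G,
       xi G + 2 * eta G + sigmaNum G = Fintype.card V] := by
  have hkey := key G hG
  have hcard : alphaNum G + muNum G = Fintype.card V := hG
  tfae_have 1 → 2 := fun h1 => by omega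
  tfae_have 2 → 3 := fun h2 => by omega
  tfae_have 3 → 1 := fun h3 => by omega
  tfae_finish

end KEG
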